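/- arXiv:0811.3219 — 3 statements merged into one kernel-verified Lean document; each statement's English description precedes it below -/
import Mathlib

section
/- Let F' be a field and consider the field of Laurent series F'((u)) with the u-adic valuation v_u normalized by v_u(u) = 1. Given integers s1, t1, s2, t2 and v1, v2 ∈ F'((u)), there exists a matrix B ∈ GL₂(F'[[u]]) such that B · [[u^{s1}, v1],[0, u^{t1}]] = [[u^{s2}, v2],[0, u^{t2}]] if and only if s1 = s2, t1 = t2, and v1 - v2 ∈ u^{t1} F'[[u]]. -/
open HahnSeries PowerSeries

private lemma xne {F' : Type*} [Field F'] :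
    (HahnSeries.single (1 : ℤ) (1 : F') : LaurentSeries F') ≠ 0 :=
  HahnSeries.single_ne_zero one_ne_zero

private lemma unit_eq_one {F' : Type*} [Field F'] (a : PowerSeries F') (ha : IsUnit a) (k : ℤ)
    (h : HahnSeries.ofPowerSeries ℤ F' a =
      (HahnSeries.single (1 : ℤ) (1 : F') : LaurentSeries F') ^ k) :
    k = 0 ∧ a = 1 := by
  rcases le_or_gt 0 k with hk | hk
  · lift k to ℕ using hk
    have h2 : HahnSeries.ofPowerSeries ℤ F' a =
        HahnSeries.ofPowerSeries ℤ F' (PowerSeries.X ^ k) := by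
      rw [map_pow, ofPowerSeries_X, h, zpow_natCast]
    have ha' : a = PowerSeries.X ^ k := ofPowerSeries_injective h2
    subst ha'
    rcases Nat.eq_zero_or_pos k with rfl | hkpos
    · simp
    · exfalso
      have := ha.map (PowerSeries.constantCoeff (R := F'))
      rw [map_pow, PowerSeries.constantCoeff_X, zero_pow hkpos.ne'] at this
      exact not_isUnit_zero this
  · exfalso
    have h2 : HahnSeries.ofPowerSeries ℤ F' (a * PowerSeries.X ^ (-k).toNat) =
        HahnSeries.ofPowerSeries ℤ F' 1 := by
      rw [RingHom.map_one, map_mul, map_pow, ofPowerSeries_X, h, ← zpow_natCast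
        ((HahnSeries.single (1:ℤ) (1:F') : LaurentSeries F')),
        Int.toNat_of_nonneg (by omega : (0:ℤ) ≤ -k), ← zpow_add₀ (xne (F' := F')),
        add_neg_cancel, zpow_zero]
    have h3 : a * PowerSeries.X ^ (-k).toNat = 1 := ofPowerSeries_injective h2
    have := congrArg (PowerSeries.constantCoeff (R := F')) h3
    rw [map_mul, map_pow, PowerSeries.constantCoeff_X, zero_pow (by omega : (-k).toNat ≠ 0),
      mul_zero, map_one] at this
    exact one_ne_zero this.symm

/-- Lemma 1.3 of the paper: a change of basis matrix `B ∈ GL₂(F'[[u]])` transforms the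
upper triangular lattice matrix `[[u^{s1}, v1],[0, u^{t1}]]` into
`[[u^{s2}, v2],[0, u^{t2}]]` if and only if `s1 = s2`, `t1 = t2` and
`v1 - v2 ∈ u^{t1} F'[[u]]`. -/
theorem stmt_3 (F' : Type*) [Field F'] (s1 t1 s2 t2 : ℤ) (v1 v2 : LaurentSeries F') :
    (∃ B : Matrix.GeneralLinearGroup (Fin 2) (PowerSeries F'),
      ((B : Matrix (Fin 2) (Fin 2) (PowerSeries F')).map
          (HahnSeries.ofPowerSeries ℤ F')) *
        !![(HahnSeries.single (1 : ℤ) (1 : F') : LaurentSeries F') ^ s1, v1;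
           0, (HahnSeries.single (1 : ℤ) (1 : F') : LaurentSeries F') ^ t1] =
      !![(HahnSeries.single (1 : ℤ) (1 : F') : LaurentSeries F') ^ s2, v2;
         0, (HahnSeries.single (1 : ℤ) (1 : F') : LaurentSeries F') ^ t2]) ↔
    (s1 = s2 ∧ t1 = t2 ∧ ∃ f : PowerSeries F',
      v1 - v2 = (HahnSeries.single (1 : ℤ) (1 : F') : LaurentSeries F') ^ t1 *
        HahnSeries.ofPowerSeries ℤ F' f) := by
  constructor
  · rintro ⟨B, hB⟩
    have h00 := congrArg (fun M => M 0 0) hB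
    have h01 := congrArg (fun M => M 0 1) hB
    have h10 := congrArg (fun M => M 1 0) hB
    have h11 := congrArg (fun M => M 1 1) hB
    simp only [Matrix.mul_apply, Fin.sum_univ_two, Matrix.map_apply, Matrix.cons_val',
      Matrix.cons_val_zero, Matrix.cons_val_one, Matrix.head_cons, Matrix.head_fin_const,
      Matrix.empty_val', Matrix.cons_val_fin_one, Matrix.of_apply, Matrix.cons_val_zero,
      mul_zero, add_zero, zero_add] at h00 h01 h10 h11
    set a := (B : Matrix (Fin 2) (Fin 2) (PowerSeries F')) 0 0 with haa
    set b := (B : Matrix (Fin 2) (Fin 2) (PowerSeries F')) 0 1 with hbb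
    set c := (B : Matrix (Fin 2) (Fin 2) (PowerSeries F')) 1 0 with hcc
    set d := (B : Matrix (Fin 2) (Fin 2) (PowerSeries F')) 1 1 with hdd
    have hc : c = 0 := by
      have := (mul_eq_zero.1 h10).resolve_right (zpow_ne_zero _ (xne (F' := F')))
      exact ofPowerSeries_injective (by rw [this, map_zero])
    have hdet : IsUnit ((B : Matrix (Fin 2) (Fin 2) (PowerSeries F')).det) :=
      (Matrix.isUnit_iff_isUnit_det _).1 B.isUnit
    rw [Matrix.det_fin_two, ← haa, ← hbb, ← hcc, ← hdd, hc, mul_zero, sub_zero] at hdet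
    have hua : IsUnit a := isUnit_of_mul_isUnit_left hdet
    have hud : IsUnit d := isUnit_of_mul_isUnit_right hdet
    have hae : HahnSeries.ofPowerSeries ℤ F' a =
        (HahnSeries.single (1 : ℤ) (1 : F') : LaurentSeries F') ^ (s2 - s1) := by
      rw [zpow_sub₀ (xne (F' := F')), eq_div_iff (zpow_ne_zero _ (xne (F' := F'))), h00]
    obtain ⟨hs, ha1⟩ := unit_eq_one a hua _ hae
    rw [hc, map_zero, zero_mul, zero_add] at h11
    have hde : HahnSeries.ofPowerSeries ℤ F' d =
        (HahnSeries.single (1 : ℤ) (1 : F') : LaurentSeries F') ^ (t2 - t1) := by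
      rw [zpow_sub₀ (xne (F' := F')), eq_div_iff (zpow_ne_zero _ (xne (F' := F'))), h11]
    obtain ⟨ht, hd1⟩ := unit_eq_one d hud _ hde
    refine ⟨by omega, by omega, -b, ?_⟩
    rw [ha1, map_one, one_mul] at h01
    rw [map_neg]
    linear_combination h01
  · rintro ⟨rfl, rfl, f, hf⟩
    refine ⟨⟨!![1, -f; 0, 1], !![1, f; 0, 1], ?_, ?_⟩, ?_⟩
    · ext i j : 2
      fin_cases i <;> fin_cases j <;>
        simp [Matrix.mul_apply, Fin.sum_univ_two]
    · ext i j : 2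
      fin_cases i <;> fin_cases j <;>
        simp [Matrix.mul_apply, Fin.sum_univ_two]
    · refine Matrix.ext fun i j => ?_
      fin_cases i <;> fin_cases j <;>
        simp only [Fin.mk_zero, Fin.mk_one, Matrix.mul_apply, Fin.sum_univ_two, Matrix.map_apply, Matrix.cons_val',
          Matrix.cons_val_zero, Matrix.cons_val_one, Matrix.head_cons, Matrix.head_fin_const,
          Matrix.empty_val', Matrix.cons_val_fin_one, Matrix.of_apply, map_neg, map_one,
          map_zero] <;>
        first
          | ring1
          | linear_combination hf
end

section
/- Let p > 2 be prime and write e = (p+1)e0 + e1 with integers e0 ≥ 0 and 0 ≤ e1 ≤ p. Let n ≥ 1 and let (c_i)_{i∈ℤ/nℤ} be nonnegative integers satisfying: (A) if c_i = e0 + l for some l ≥ 1 then c_{i+1} ≤ e0 + e1 - p*l + 1, and (B) if c_i = e0 + 1 and c_{i+1} = e0 + e1 - p + 1 then c_{i+2} ≤ e0 - (p-1)*e1 + 1. If 0 ≤ e1 ≤ p-2, then the sum of the c_i over i ∈ ℤ/nℤ is at most n*e0. -/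
theorem stmt_7 (p e e0 e1 : ℤ) (hp : Prime p) (hp2 : 2 < p)
    (he0 : 0 ≤ e0) (he1 : 0 ≤ e1) (he1' : e1 ≤ p - 2)
    (he : e = (p + 1) * e0 + e1)
    (n : ℕ) [NeZero n] (hn : 1 ≤ n) (c : ZMod n → ℤ) (hc : ∀ i, 0 ≤ c i)
    (hA : ∀ i, ∀ l : ℤ, 1 ≤ l → c i = e0 + l → c (i + 1) ≤ e0 + e1 - p * l + 1)
    (hB : ∀ i, c i = e0 + 1 → c (i + 1) = e0 + e1 - p + 1 →
      c (i + 2) ≤ e0 - (p - 1) * e1 + 1) :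
    ∑ i : ZMod n, c i ≤ n * e0 := by
  classical
  set d : ZMod n → ℤ := fun i => c i - e0 with hd
  have key : ∀ i, 1 ≤ d i → d (i + 1) ≤ -d i := by
    intro i hi
    have hl : c i = e0 + d i := by simp [hd]
    have h1 := hA i (d i) hi hl
    have h2 : e1 + 1 ≤ (p - 1) * d i := by nlinarith
    simp only [hd]
    nlinarith
  set S := Finset.univ.filter (fun i => 0 < d i) with hS
  set T := S.image (fun i => i + 1) with hT
  have hinj : Set.InjOn (fun i : ZMod n => i + 1) S := fun a _ b _ h => by
    simpa using add_right_cancel (a := a) (b := (1 : ZMod n)) (c := b) h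
  have hTsub : T ⊆ Finset.univ.filter (fun i => ¬ 0 < d i) := by
    intro j hj
    simp only [hT, Finset.mem_image] at hj
    obtain ⟨i, hiS, rfl⟩ := hj
    have hipos : 0 < d i := by simpa [hS] using hiS
    have := key i hipos
    simp only [Finset.mem_filter, Finset.mem_univ, true_and]
    omega
  have hTle : ∑ j ∈ T, d j ≤ -∑ i ∈ S, d i := by
    rw [hT, Finset.sum_image hinj, ← Finset.sum_neg_distrib]
    exact Finset.sum_le_sum fun i hi => key i (by have h0 : 0 < d i := (by simpa [hS] using hi); omega)
  have hcomp : ∑ j ∈ Finset.univ.filter (fun i => ¬ 0 < d i), d j ≤ ∑ j ∈ T, d j := by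
    have := Finset.sum_sdiff (f := d) hTsub
    have hnp : ∑ j ∈ (Finset.univ.filter (fun i => ¬ 0 < d i)) \ T, d j ≤ 0 :=
      Finset.sum_nonpos fun j hj => by
        have := (Finset.mem_sdiff.mp hj).1
        simp only [Finset.mem_filter] at this
        omega
    omega
  have hsplit := Finset.sum_filter_add_sum_filter_not Finset.univ (fun i => 0 < d i) d
  rw [← hS] at hsplit
  have hdsum : ∑ i : ZMod n, d i ≤ 0 := by omega
  have hcount : (Finset.univ : Finset (ZMod n)).card = n := by
    simpa using ZMod.card n
  have : ∑ i : ZMod n, d i = (∑ i : ZMod n, c i) - n * e0 := by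
    simp [hd, Finset.sum_sub_distrib, hcount, mul_comm]
  omega
end

section
/- Let p > 2 be prime, e0 ≥ 0 an integer, e1 = p, and n ≥ 2. Let (c_i)_{i∈ℤ/nℤ} be nonnegative integers satisfying: (A) if c_i = e0 + l for some l ≥ 1 then c_{i+1} ≤ e0 - p*(l-1) + 1, and (B) if c_i = e0 + 1 and c_{i+1} = e0 + 1 then c_{i+2} ≤ e0 - 5. Then ∑_{i∈ℤ/nℤ} c_i ≤ n*e0 + ⌊n/2⌋. -/
/-- Potential function for the telescoping argument. -/
def hfun (a b : ℤ) : ℤ :=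
  if 1 ≤ b then (if a = 1 then 0 else 1)
  else if 2 ≤ a then 2 - 2 * a
  else if a = 1 ∧ b ≤ -1 then -1
  else 0

lemma key_step (p a b c : ℤ) (hp3 : 3 ≤ p)
    (hA1 : 1 ≤ a → b ≤ 1 - p * (a - 1))
    (hA2 : 1 ≤ b → c ≤ 1 - p * (b - 1))
    (hB : a = 1 → b = 1 → c ≤ -5) :
    hfun b c ≤ 1 - 2 * b + hfun a b := by
  have hqa : 1 ≤ a → 3 * (a - 1) ≤ p * (a - 1) := by
    intro h; nlinarith
  have hqb : 1 ≤ b → 3 * (b - 1) ≤ p * (b - 1) := by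
    intro h; nlinarith
  set q := p * (a - 1) with hq
  set r := p * (b - 1) with hr
  clear_value q r
  clear hq hr hp3
  unfold hfun
  split_ifs <;> omega

theorem stmt_9 (p e0 e1 : ℤ) (hp : Prime p) (hp2 : 2 < p)
    (he0 : 0 ≤ e0) (he1 : e1 = p)
    (n : ℕ) [NeZero n] (hn : 2 ≤ n) (c : ZMod n → ℤ) (hc : ∀ i, 0 ≤ c i)
    (hA : ∀ i, ∀ l : ℤ, 1 ≤ l → c i = e0 + l → c (i + 1) ≤ e0 - p * (l - 1) + 1)
    (hB : ∀ i, c i = e0 + 1 → c (i + 1) = e0 + 1 → c (i + 2) ≤ e0 - 5) :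
    ∑ i : ZMod n, c i ≤ n * e0 + (n / 2 : ℕ) := by
  have hp3 : 3 ≤ p := by omega
  have key' : ∀ i : ZMod n, 2 * (c i - e0) ≤
      1 + hfun (c (i - 1) - e0) (c i - e0) - hfun (c i - e0) (c (i + 1) - e0) := by
    intro i
    have h := key_step p (c (i - 1) - e0) (c i - e0) (c (i + 1) - e0) hp3
      (fun h1 => by
        have := hA (i - 1) (c (i - 1) - e0) h1 (by ring)
        have hi : i - 1 + 1 = i := by ring
        rw [hi] at this
        linarith)
      (fun h1 => by
        have := hA i (c i - e0) h1 (by ring)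
        linarith)
      (fun h1 h2 => by
        have := hB (i - 1) (by linarith [h1]; ) ?_
        · have hi : i - 1 + 2 = i + 1 := by ring
          rw [hi] at this
          linarith
        · have hi : i - 1 + 1 = i := by ring
          rw [hi]
          linarith)
    linarith
  have hsum := Finset.sum_le_sum (fun i (_ : i ∈ Finset.univ) => key' i)
  have hre : ∑ i : ZMod n, hfun (c i - e0) (c (i + 1) - e0)
      = ∑ i : ZMod n, hfun (c (i - 1) - e0) (c i - e0) := by
    apply Fintype.sum_equiv (Equiv.addRight (1 : ZMod n))
    intro i
    simp
  have hcard : (Finset.univ : Finset (ZMod n)).card = n := by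
    simp [ZMod.card]
  rw [Finset.sum_sub_distrib, Finset.sum_add_distrib, Finset.sum_const, hcard,
    hre] at hsum
  -- hsum : ∑ i, 2 * (c i - e0) ≤ n • 1 + Φ - Φ
  have h2 : 2 * (∑ i : ZMod n, c i - (n : ℤ) * e0) ≤ (n : ℤ) := by
    have hl : ∑ i : ZMod n, 2 * (c i - e0) = 2 * (∑ i : ZMod n, c i - (n : ℤ) * e0) := by
      rw [← Finset.mul_sum]
      rw [Finset.sum_sub_distrib, Finset.sum_const, hcard]
      push_cast
      ring
    rw [hl] at hsum
    simpa using hsum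
  set S := ∑ i : ZMod n, c i with hS
  have hu : ∀ u : ℤ, 2 * u ≤ (n : ℤ) → u ≤ ((n / 2 : ℕ) : ℤ) := by
    intro u h; omega
  have := hu (S - (n : ℤ) * e0) h2
  linarith
end
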